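/- Let k, m, n, s be integers with k ≥ 3, m ≥ 3, n ≥ (k-1)m + 1, and 2 ≤ s ≤ m - 1. Define ψ(x) = (k-2)x² - (2km + kn - 3m - n - 2ks - 2k + 2s + 2)x - kms - km + ms + m - kns - kn + ns + n + km² - m² + kmn - mn, viewed as a real quadratic with positive leading coefficient k - 2 > 0. Then for every real x with m + (k-1)s ≤ x ≤ m + n, ψ(x) ≤ max(ψ(m + (k-1)s), ψ(m + n)) < 0. -/
import Mathlib
set_option maxHeartbeats 1000000


/-- ψ(x) as in the paper, viewed as a real quadratic. -/
def psi (k m n s x : ℝ) : ℝ :=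
  (k-2)*x^2 - (2*k*m + k*n - 3*m - n - 2*k*s - 2*k + 2*s + 2)*x
    - k*m*s - k*m + m*s + m - k*n*s - k*n + n*s + n + k*m^2 - m^2 + k*m*n - m*n

theorem stmt_9 (k m n s : ℤ) (hk : 3 ≤ k) (hm : 3 ≤ m)
    (hn : (k-1)*m + 1 ≤ n) (hs1 : 2 ≤ s) (hs2 : s ≤ m - 1) :
    ∀ x : ℝ, (m : ℝ) + (k-1)*s ≤ x → x ≤ (m : ℝ) + n →
      psi k m n s x ≤
        max (psi k m n s ((m : ℝ) + (k-1)*s)) (psi k m n s ((m : ℝ) + n)) ∧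
      max (psi k m n s ((m : ℝ) + (k-1)*s)) (psi k m n s ((m : ℝ) + n)) < 0 := by
  intro x hxa hxb
  have hk' : (3:ℝ) ≤ (k:ℝ) := by exact_mod_cast hk
  have hm' : (3:ℝ) ≤ (m:ℝ) := by exact_mod_cast hm
  have hn' : ((k:ℝ)-1)*(m:ℝ) + 1 ≤ (n:ℝ) := by exact_mod_cast hn
  have hs1' : (2:ℝ) ≤ (s:ℝ) := by exact_mod_cast hs1
  have hs2' : (s:ℝ) ≤ (m:ℝ) - 1 := by exact_mod_cast hs2
  set K := (k:ℝ); set M := (m:ℝ); set N := (n:ℝ); set S := (s:ℝ)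
  set a : ℝ := M + (K-1)*S with ha
  set b : ℝ := M + N with hb
  have hba : a + 3 ≤ b := by
    have : (K-1)*(M-1-S) ≥ 0 := by nlinarith
    nlinarith
  have hpa : psi K M N S a < 0 := by
    have hfac : psi K M N S a
        = (K-1)*((K-1)*S*(K*S+2) - N*(K*S+1) + M) := by
      simp only [psi, ha]; ring
    rw [hfac]
    have h1 : N*(K*S+1) ≥ ((K-1)*M+1)*(K*S+1) := by
      nlinarith [mul_nonneg (by nlinarith : (0:ℝ) ≤ N - ((K-1)*M+1)) (by nlinarith : (0:ℝ) ≤ K*S+1)]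
    have h2 : ((K-1)*M+1)*(K*S+1) > (K-1)*S*(K*S+2) + M := by
      nlinarith [mul_nonneg (mul_nonneg (mul_nonneg (by nlinarith : (0:ℝ) ≤ K-1) (by nlinarith : (0:ℝ) ≤ S)) (by nlinarith : (0:ℝ) ≤ K)) (by nlinarith : (0:ℝ) ≤ M-1-S),
        mul_nonneg (mul_nonneg (by nlinarith : (0:ℝ) ≤ K-2) (by nlinarith : (0:ℝ) ≤ K-1)) (by nlinarith : (0:ℝ) ≤ S)]
    nlinarith
  have hpb : psi K M N S b < 0 := by
    have hfac : psi K M N S b = (M+N)*((K-1)*(S+1) - N) := by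
      simp only [psi, hb]; ring
    rw [hfac]
    have h1 : (K-1)*(S+1) - N < 0 := by nlinarith
    have h2 : (0:ℝ) < M + N := by nlinarith
    nlinarith
  have hmax : max (psi K M N S a) (psi K M N S b) < 0 := max_lt hpa hpb
  refine ⟨?_, hmax⟩
  have hMa : psi K M N S a ≤ max (psi K M N S a) (psi K M N S b) := le_max_left _ _
  have hMb : psi K M N S b ≤ max (psi K M N S a) (psi K M N S b) := le_max_right _ _
  set Mx := max (psi K M N S a) (psi K M N S b) with hMx
  have hid : (b-x)*psi K M N S a + (x-a)*psi K M N S b - (b-a)*psi K M N S x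
      = (K-2)*(x-a)*(b-x)*(b-a) := by
    simp only [psi]; ring
  have hpos : (0:ℝ) < b - a := by linarith
  have hkey : (b-a)*psi K M N S x ≤ (b-a)*Mx := by
    have t1 : (0:ℝ) ≤ (K-2)*(x-a)*(b-x)*(b-a) := by
      have := mul_nonneg (mul_nonneg (mul_nonneg (by nlinarith : (0:ℝ) ≤ K-2) (by linarith : (0:ℝ) ≤ x-a)) (by linarith : (0:ℝ) ≤ b-x)) (by linarith : (0:ℝ) ≤ b-a)
      linarith [this]
    have t2 : (b-x)*psi K M N S a ≤ (b-x)*Mx := mul_le_mul_of_nonneg_left hMa (by linarith)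
    have t3 : (x-a)*psi K M N S b ≤ (x-a)*Mx := mul_le_mul_of_nonneg_left hMb (by linarith)
    have t4 : (b-x)*Mx + (x-a)*Mx = (b-a)*Mx := by ring
    linarith
  exact le_of_mul_le_mul_left (by linarith [hkey]) hpos
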